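/- Let X be a finite discrete space. Then for every max-min measure μ on X, every φ ∈ C(X) and every c > 0, the inequalities μ(φ + c_X) ≤ μ(φ) + c and μ(φ) - c ≤ μ(φ - c_X) hold, where c_X denotes the constant function with value c. -/

import Mathlib

def IsMaxMinMeasure {X : Type*} [TopologicalSpace X] (μ : C(X, ℝ) → ℝ) : Prop :=
  (∀ c : ℝ, μ (ContinuousMap.const X c) = c) ∧
  (∀ φ ψ : C(X, ℝ), μ (φ ⊔ ψ) = max (μ φ) (μ ψ)) ∧
  (∀ (c : ℝ) (φ : C(X, ℝ)), μ (ContinuousMap.const X c ⊓ φ) = min c (μ φ))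
/-- on a finite discrete space, every max-min measure satisfies
`μ(φ + c) ≤ μ(φ) + c` and `μ(φ) - c ≤ μ(φ - c)` for every `c > 0`. -/
theorem maxMinMeasure_translation_ineq_finite
    {X : Type*} [TopologicalSpace X] [DiscreteTopology X] [Finite X]
    (μ : C(X, ℝ) → ℝ) (hμ : IsMaxMinMeasure μ) (φ : C(X, ℝ)) (c : ℝ) (hc : 0 < c) :
    μ (φ + ContinuousMap.const X c) ≤ μ φ + c ∧
      μ φ - c ≤ μ (φ - ContinuousMap.const X c) := by
  obtain ⟨hconst, hsup, hinf⟩ := hμ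
  classical
  cases isEmpty_or_nonempty X with
  | inl h =>
    have h1 : φ + ContinuousMap.const X c = φ := by
      ext x; exact (IsEmpty.false x).elim
    have h2 : φ - ContinuousMap.const X c = φ := by
      ext x; exact (IsEmpty.false x).elim
    rw [h1, h2]
    constructor <;> linarith
  | inr h =>
    have : Fintype X := Fintype.ofFinite X
    have hne : (Finset.univ : Finset X).Nonempty := Finset.univ_nonempty
    set Mv : ℝ := Finset.univ.sup' hne (fun x => φ x) + c with hMv
    set mv : ℝ := Finset.univ.inf' hne (fun x => φ x) - c with hmv
    let e : X → C(X, ℝ) := fun x =>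
      ⟨fun y => if y = x then Mv else mv, continuous_of_discreteTopology⟩
    have he : ∀ x y : X, e x y = if y = x then Mv else mv := fun _ _ => rfl
    have key : ∀ ψ : C(X, ℝ), (∀ y, mv ≤ ψ y) → (∀ y, ψ y ≤ Mv) →
        μ ψ = Finset.univ.sup' hne (fun x => min (ψ x) (μ (e x))) := by
      intro ψ hlo hhi
      have hrep : ψ = Finset.univ.sup' hne
          (fun x => ContinuousMap.const X (ψ x) ⊓ e x) := by
        ext y
        have hev := Finset.comp_sup'_eq_sup'_comp (γ := ℝ) hne
          (f := fun x => ContinuousMap.const X (ψ x) ⊓ e x)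
          (fun f : C(X, ℝ) => f y) (fun f g => rfl)
        have hev' : (Finset.univ.sup' hne fun x => ContinuousMap.const X (ψ x) ⊓ e x) y =
            Finset.univ.sup' hne (fun x => (ContinuousMap.const X (ψ x) ⊓ e x) y) := hev
        rw [hev']
        apply le_antisymm
        · have := Finset.le_sup' (b := y) (h := Finset.mem_univ y)
            (f := fun x => ((fun f : C(X, ℝ) => f y) ∘
              fun x => ContinuousMap.const X (ψ x) ⊓ e x) x)
          refine le_trans ?_ this
          simp [he, (show ∀ a b : ℝ, a ⊓ b = min a b from fun _ _ => rfl), hhi y]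
        · apply Finset.sup'_le
          intro x _
          by_cases hx : y = x
          · subst hx; simp [he, (show ∀ a b : ℝ, a ⊓ b = min a b from fun _ _ => rfl), hhi y]
          · simp only [Function.comp, ContinuousMap.inf_apply, ContinuousMap.const_apply,
              he, if_neg hx, (show ∀ a b : ℝ, a ⊓ b = min a b from fun _ _ => rfl)]
            exact min_le_of_right_le (hlo y)
      calc μ ψ = μ (Finset.univ.sup' hne (fun x => ContinuousMap.const X (ψ x) ⊓ e x)) := by
            rw [← hrep]
        _ = Finset.univ.sup' hne (fun x => μ (ContinuousMap.const X (ψ x) ⊓ e x)) := by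
            exact Finset.comp_sup'_eq_sup'_comp hne μ (fun f g => hsup f g)
        _ = Finset.univ.sup' hne (fun x => min (ψ x) (μ (e x))) := by
            apply Finset.sup'_congr hne rfl
            intro x _
            exact hinf (ψ x) (e x)
    have hφlo : ∀ y, mv ≤ φ y := fun y => by
      have := Finset.inf'_le (fun x => φ x) (Finset.mem_univ y)
      rw [hmv]; linarith
    have hφhi : ∀ y, φ y ≤ Mv := fun y => by
      have := Finset.le_sup' (f := fun x => φ x) (Finset.mem_univ y)
      rw [hMv]; linarith
    have kφ := key φ hφlo hφhi
    constructor
    · have kψ := key (φ + ContinuousMap.const X c)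
        (fun y => by simp only [ContinuousMap.add_apply, ContinuousMap.const_apply]
                     linarith [hφlo y])
        (fun y => by simp only [ContinuousMap.add_apply, ContinuousMap.const_apply]
                     have := Finset.le_sup' (f := fun x => φ x) (Finset.mem_univ y)
                     rw [hMv]; linarith)
      rw [kψ]
      apply Finset.sup'_le
      intro x _
      have h1 : min ((φ + ContinuousMap.const X c) x) (μ (e x)) ≤ min (φ x) (μ (e x)) + c := by
        simp only [ContinuousMap.add_apply, ContinuousMap.const_apply]
        rw [← min_add_add_right]
        exact min_le_min le_rfl (by linarith)
      refine h1.trans ?_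
      have h2 : min (φ x) (μ (e x)) ≤ μ φ := by
        rw [kφ]
        exact Finset.le_sup' (fun x => min (φ x) (μ (e x))) (Finset.mem_univ x)
      linarith
    · have kψ := key (φ - ContinuousMap.const X c)
        (fun y => by simp only [ContinuousMap.sub_apply, ContinuousMap.const_apply]
                     have := Finset.inf'_le (fun x => φ x) (Finset.mem_univ y)
                     rw [hmv]; linarith)
        (fun y => by simp only [ContinuousMap.sub_apply, ContinuousMap.const_apply]
                     linarith [hφhi y])
      rw [kφ, sub_le_iff_le_add]
      apply Finset.sup'_le
      intro x _
      have h1 : min (φ x) (μ (e x)) ≤ min ((φ - ContinuousMap.const X c) x) (μ (e x)) + c := by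
        simp only [ContinuousMap.sub_apply, ContinuousMap.const_apply]
        rw [← min_add_add_right]
        exact min_le_min (by linarith) (by linarith)
      refine h1.trans ?_
      have h2 : min ((φ - ContinuousMap.const X c) x) (μ (e x)) ≤
          μ (φ - ContinuousMap.const X c) := by
        rw [kψ]
        exact Finset.le_sup'
          (fun x => min ((φ - ContinuousMap.const X c) x) (μ (e x))) (Finset.mem_univ x)
      linarith
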